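/- arXiv:1205.6138 — 3 statements merged into one kernel-verified Lean document; each statement's English description precedes it below -/
import Mathlib

section
/- Let g ≥ 3 be an integer. There exist integers r and d with 1 ≤ r < d ≤ g−1 such that the Brill–Noether number ρ(g,r,d) = g − (r+1)(g−d+r) equals −1 if and only if g+1 is composite (i.e., g+1 is not prime). -/
/-- For an integer `g ≥ 3`, the diophantine equation `ρ(g,r,d) = g - (r+1)(g-d+r) = -1`
has integer solutions with `1 ≤ r < d ≤ g - 1` if and only if `g + 1` is composite
(i.e., not prime). -/
theorem brill_noether_minus_one_solvable_iff_composite (g : ℕ) (hg : 3 ≤ g) :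
    (∃ r d : ℤ, 1 ≤ r ∧ r < d ∧ d ≤ (g : ℤ) - 1 ∧
      (g : ℤ) - (r + 1) * ((g : ℤ) - d + r) = -1) ↔ ¬ Nat.Prime (g + 1) := by
  constructor
  · rintro ⟨r, d, h1, h2, h3, heq⟩ hp
    have hP : Prime ((g : ℤ) + 1) := by
      have := Nat.prime_iff_prime_int.mp hp
      simpa using this
    have key : ((g : ℤ) + 1) = (r + 1) * ((g : ℤ) - d + r) := by linarith
    have hb2 : (2 : ℤ) ≤ (g : ℤ) - d + r := by linarith
    rcases hP.irreducible.isUnit_or_isUnit key with h | h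
    · rcases Int.isUnit_iff.mp h with h | h <;> omega
    · rcases Int.isUnit_iff.mp h with h | h <;> omega
  · intro hn
    set n := g + 1 with hndef
    have hn4 : 4 ≤ n := by omega
    have hp : (n.minFac).Prime := Nat.minFac_prime (by omega)
    set p := n.minFac with hpdef
    have hp2 : 2 ≤ p := hp.two_le
    have hmul : p * (n / p) = n := Nat.mul_div_cancel' (Nat.minFac_dvd n)
    set b := n / p with hbdef
    have hsq : p * p ≤ n := by
      have := Nat.minFac_sq_le_self (by omega) hn
      simpa [pow_two] using this
    have hpb : p ≤ b := by nlinarith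
    have hblt : b < g := by nlinarith
    refine ⟨(p : ℤ) - 1, (g : ℤ) + (p : ℤ) - 1 - (b : ℤ), by exact_mod_cast (by omega : (1:ℤ) ≤ p - 1), ?_, ?_, ?_⟩
    · have : (b : ℤ) < g := by exact_mod_cast hblt
      omega
    · have : (p : ℤ) ≤ b := by exact_mod_cast hpb
      omega
    · have hmz : (p : ℤ) * (b : ℤ) = (g : ℤ) + 1 := by exact_mod_cast hmul
      ring_nf
      nlinarith [hmz]
end

section
/- For every integer s ≥ 2, set g = s(2s+1) and define Z(s) = 3(16s⁷ − 16s⁶ + 12s⁵ − 24s⁴ − 4s³ + 41s² + 9s + 2) / (s(8s⁶ − 8s⁵ − 2s⁴ + s² + 11s + 2)). Then the denominator s(8s⁶ − 8s⁵ − 2s⁴ + s² + 11s + 2) is strictly positive, Z(2) = 7, and Z(s) < 6 + 12/(g+1) for all s ≥ 2. -/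
/-- The slope of the Koszul divisor `Z_s` on `M_g`, `g = s(2s+1)`. -/
def koszulSlopeZ (s : ℕ) : ℚ :=
  3 * (16 * (s : ℚ) ^ 7 - 16 * (s : ℚ) ^ 6 + 12 * (s : ℚ) ^ 5 - 24 * (s : ℚ) ^ 4
        - 4 * (s : ℚ) ^ 3 + 41 * (s : ℚ) ^ 2 + 9 * (s : ℚ) + 2) /
    ((s : ℚ) * (8 * (s : ℚ) ^ 6 - 8 * (s : ℚ) ^ 5 - 2 * (s : ℚ) ^ 4 + (s : ℚ) ^ 2
        + 11 * (s : ℚ) + 2))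

/-- For every integer `s ≥ 2` and `g = s(2s+1)`: the denominator of `Z(s)` is positive,
`Z(2) = 7`, and `Z(s) < 6 + 12/(g+1)`. -/
theorem koszul_slope_bound :
    (∀ s : ℕ, 2 ≤ s →
      0 < (s : ℚ) * (8 * (s : ℚ) ^ 6 - 8 * (s : ℚ) ^ 5 - 2 * (s : ℚ) ^ 4 + (s : ℚ) ^ 2
            + 11 * (s : ℚ) + 2) ∧
      koszulSlopeZ s < 6 + 12 / (((s * (2 * s + 1) : ℕ) : ℚ) + 1)) ∧
    koszulSlopeZ 2 = 7 := by
  constructor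
  · intro s hs
    have hx : (2 : ℚ) ≤ (s : ℚ) := by exact_mod_cast hs
    set x : ℚ := (s : ℚ) with hxdef
    have hD : 0 < x * (8 * x ^ 6 - 8 * x ^ 5 - 2 * x ^ 4 + x ^ 2 + 11 * x + 2) := by
      nlinarith [pow_pos (by linarith : (0:ℚ) < x) 4, pow_pos (by linarith : (0:ℚ) < x) 5,
        pow_pos (by linarith : (0:ℚ) < x) 6, sq_nonneg x]
    refine ⟨hD, ?_⟩
    have hg : (((s * (2 * s + 1) : ℕ) : ℚ) + 1) = 2 * x ^ 2 + x + 1 := by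
      push_cast; ring
    have hg1 : (0 : ℚ) < 2 * x ^ 2 + x + 1 := by nlinarith
    rw [koszulSlopeZ, hg, ← hxdef]
    have hR : 6 + 12 / (2 * x ^ 2 + x + 1)
        = (6 * (2 * x ^ 2 + x + 1) + 12) / (2 * x ^ 2 + x + 1) := by
      field_simp
    rw [hR, div_lt_div_iff₀ hD hg1]
    nlinarith [pow_pos (by linarith : (0:ℚ) < x) 3, pow_pos (by linarith : (0:ℚ) < x) 4,
      mul_nonneg (mul_nonneg (by linarith : (0:ℚ) ≤ x - 2) (by linarith : (0:ℚ) ≤ x - 2))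
        (pow_pos (by linarith : (0:ℚ) < x) 3).le,
      mul_nonneg (by linarith : (0:ℚ) ≤ x - 2)
        (pow_pos (by linarith : (0:ℚ) < x) 4).le]
  · norm_num [koszulSlopeZ]
end

section
/- For every integer s ≥ 2, set g = 2s² + s + 1 and define D(s) = 3(48s⁸ − 56s⁷ + 92s⁶ − 90s⁵ + 86s⁴ + 324s³ + 317s² + 182s + 48) / (24s⁸ − 28s⁷ + 22s⁶ − 5s⁵ + 43s⁴ + 112s³ + 100s² + 50s + 12). Then D(2) = 7, and for every integer s ≥ 3 the strict inequalities 6 + 10/g < D(s) < 6 + 12/(g+1) hold. -/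
/-- The slope of the Koszul divisor `𝔇_s` on `M_g`, `g = 2s² + s + 1`. -/
def koszulSlopeD (s : ℕ) : ℚ :=
  3 * (48 * (s : ℚ) ^ 8 - 56 * (s : ℚ) ^ 7 + 92 * (s : ℚ) ^ 6 - 90 * (s : ℚ) ^ 5
        + 86 * (s : ℚ) ^ 4 + 324 * (s : ℚ) ^ 3 + 317 * (s : ℚ) ^ 2 + 182 * (s : ℚ) + 48) /
    (24 * (s : ℚ) ^ 8 - 28 * (s : ℚ) ^ 7 + 22 * (s : ℚ) ^ 6 - 5 * (s : ℚ) ^ 5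
        + 43 * (s : ℚ) ^ 4 + 112 * (s : ℚ) ^ 3 + 100 * (s : ℚ) ^ 2 + 50 * (s : ℚ) + 12)

/-- `D(2) = 7`, and for every integer `s ≥ 3`, with `g = 2s² + s + 1`, the strict
inequalities `6 + 10/g < D(s) < 6 + 12/(g+1)` hold. -/
theorem koszul_slope_bound_rho_one :
    koszulSlopeD 2 = 7 ∧
    ∀ s : ℕ, 3 ≤ s →
      6 + 10 / (((2 * s ^ 2 + s + 1 : ℕ) : ℚ)) < koszulSlopeD s ∧
      koszulSlopeD s < 6 + 12 / (((2 * s ^ 2 + s + 1 : ℕ) : ℚ) + 1) := by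
  constructor
  · norm_num [koszulSlopeD]
  · intro s hs
    set x : ℚ := (s : ℚ) with hxdef
    have hx : (3 : ℚ) ≤ x := by rw [hxdef]; exact_mod_cast hs
    have hx0 : (0 : ℚ) ≤ x := by linarith
    have hQ : (0 : ℚ) < 24 * x ^ 8 - 28 * x ^ 7 + 22 * x ^ 6 - 5 * x ^ 5
        + 43 * x ^ 4 + 112 * x ^ 3 + 100 * x ^ 2 + 50 * x + 12 := by
      nlinarith [pow_le_pow_left₀ (by norm_num : (0:ℚ) ≤ 3) hx 7, pow_le_pow_left₀ (by norm_num : (0:ℚ) ≤ 3) hx 5,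
        sq_nonneg x, pow_nonneg hx0 6, pow_nonneg hx0 8, pow_nonneg hx0 4, pow_nonneg hx0 3]
    have hgcast : ((2 * s ^ 2 + s + 1 : ℕ) : ℚ) = 2 * x ^ 2 + x + 1 := by push_cast; ring
    have hg : (0 : ℚ) < 2 * x ^ 2 + x + 1 := by nlinarith
    have hg1 : (0 : ℚ) < 2 * x ^ 2 + x + 1 + 1 := by linarith
    rw [hgcast]
    unfold koszulSlopeD
    rw [← hxdef]
    constructor
    · rw [show (6 : ℚ) + 10 / (2 * x ^ 2 + x + 1)
          = (6 * (2 * x ^ 2 + x + 1) + 10) / (2 * x ^ 2 + x + 1) by field_simp,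
        div_lt_div_iff₀ hg hQ]
      nlinarith [pow_nonneg hx0 8, pow_nonneg hx0 6, pow_nonneg hx0 4,
        pow_le_pow_left₀ (by norm_num : (0:ℚ) ≤ 3) hx 9, pow_le_pow_left₀ (by norm_num : (0:ℚ) ≤ 3) hx 7, pow_le_pow_left₀ (by norm_num : (0:ℚ) ≤ 3) hx 5,
        pow_le_pow_left₀ (by norm_num : (0:ℚ) ≤ 3) hx 3, sq_nonneg x]
    · rw [show (6 : ℚ) + 12 / (2 * x ^ 2 + x + 1 + 1)
          = (6 * (2 * x ^ 2 + x + 1 + 1) + 12) / (2 * x ^ 2 + x + 1 + 1) by field_simp,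
        div_lt_div_iff₀ hQ hg1]
      nlinarith [pow_nonneg hx0 8, pow_nonneg hx0 6, pow_nonneg hx0 4,
        pow_le_pow_left₀ (by norm_num : (0:ℚ) ≤ 3) hx 9, pow_le_pow_left₀ (by norm_num : (0:ℚ) ≤ 3) hx 7, pow_le_pow_left₀ (by norm_num : (0:ℚ) ≤ 3) hx 5,
        pow_le_pow_left₀ (by norm_num : (0:ℚ) ≤ 3) hx 3, sq_nonneg x]
end
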